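/- Let n ≥ 2 and let G_n be the group (under composition) of all homeomorphisms f of the torus T^n = ℝⁿ/ℤⁿ for which there exists a finite set S ⊆ GL_n(ℤ) such that for every x ∈ T^n there is γ ∈ S with f(x) = γ·x. Then G_n is residually finite: for every f ∈ G_n with f ≠ id there exist a finite group H and a group homomorphism φ : G_n → H with φ(f) ≠ 1. -/

import Mathlib

/-- The group of self-homeomorphisms of a topological space, under composition. -/
instance homeomorphGroup (X : Type*) [TopologicalSpace X] : Group (X ≃ₜ X) where
  mul f g := g.trans f
  one := Homeomorph.refl X
  inv := Homeomorph.symm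
  mul_assoc _ _ _ := Homeomorph.ext fun _ => rfl
  one_mul _ := Homeomorph.ext fun _ => rfl
  mul_one _ := Homeomorph.ext fun _ => rfl
  inv_mul_cancel f := Homeomorph.ext fun x => f.symm_apply_apply x

/-- The action induced on the torus `Tⁿ = ℝⁿ/ℤⁿ = (ℝ/ℤ)ⁿ` by an integer matrix `γ`
(the map induced by the linear map `x ↦ γx` of `ℝⁿ`). -/
noncomputable def torusAct {n : ℕ} (γ : Matrix (Fin n) (Fin n) ℤ)
    (x : Fin n → AddCircle (1 : ℝ)) : Fin n → AddCircle (1 : ℝ) :=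
  fun j => ∑ i, γ j i • x i

/-- The set of homeomorphisms of the torus `Tⁿ` that agree pointwise with finitely many
elements of `GL_n(ℤ)`. -/
def piecewiseLinearHomeos (n : ℕ) :
    Set ((Fin n → AddCircle (1 : ℝ)) ≃ₜ (Fin n → AddCircle (1 : ℝ))) :=
  {f | ∃ S : Finset (Matrix.GeneralLinearGroup (Fin n) ℤ),
    ∀ x : Fin n → AddCircle (1 : ℝ),
      ∃ γ ∈ S, f x = torusAct (γ : Matrix (Fin n) (Fin n) ℤ) x}

/-- The set of `m`-torsion points of `AddCircle 1` is finite. -/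
lemma aux_torsion_finite (m : ℕ) (hm : 0 < m) :
    {u : AddCircle (1:ℝ) | m • u = 0}.Finite := by
  have hsub : {u : AddCircle (1:ℝ) | m • u = 0} ⊆
      ⋃ d ∈ Finset.Icc 1 m, {u : AddCircle (1:ℝ) | addOrderOf u = d} := by
    intro u hu
    have hd : addOrderOf u ∣ m := addOrderOf_dvd_of_nsmul_eq_zero hu
    have hpos : 0 < addOrderOf u := Nat.pos_of_dvd_of_pos hd hm
    simp only [Set.mem_iUnion]
    exact ⟨addOrderOf u, Finset.mem_Icc.2 ⟨hpos, Nat.le_of_dvd hm hd⟩, rfl⟩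
  exact Set.Finite.subset (Set.Finite.biUnion (Finset.finite_toSet _)
    (fun d hd => AddCircle.finite_setOfPred_addOrderOf_eq (p := (1:ℝ)) (Finset.mem_Icc.1 hd).1)) hsub

/-- Every nonempty open subset of `AddCircle 1` contains a rational point. -/
lemma aux_exists_rat_mem (V : Set (AddCircle (1:ℝ))) (hV : IsOpen V) (hne : V.Nonempty) :
    ∃ q : ℚ, (((q:ℝ)) : AddCircle (1:ℝ)) ∈ V := by
  obtain ⟨v, hv⟩ := hne
  obtain ⟨r, rfl⟩ := QuotientAddGroup.mk_surjective v
  have hopen : IsOpen ((fun r : ℝ => (↑r : AddCircle (1:ℝ))) ⁻¹' V) :=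
    hV.preimage (AddCircle.continuous_mk' 1)
  obtain ⟨q, hq⟩ := (Rat.denseRange_cast (𝕜 := ℝ)).exists_mem_open hopen ⟨r, hv⟩
  exact ⟨q, hq⟩

/-- `torusAct` preserves `m`-torsion points. -/
lemma aux_torusAct_torsion {n : ℕ} (m : ℕ) (γ : Matrix (Fin n) (Fin n) ℤ)
    (x : Fin n → AddCircle (1:ℝ)) (hx : ∀ i, m • x i = 0) :
    ∀ j, m • torusAct γ x j = 0 := by
  intro j
  unfold torusAct
  rw [Finset.smul_sum]
  refine Finset.sum_eq_zero fun i _ => ?_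
  rw [smul_comm, hx i, smul_zero]

/-- **The piecewise `GL_n(ℤ)` group is residually finite.** Let `G_n` be the group, under
composition, of all homeomorphisms of the torus `Tⁿ` (`n ≥ 2`) agreeing pointwise with
finitely many elements of `GL_n(ℤ)`. Then for every `f ≠ id` in `G_n` there are a finite
group `H` and a homomorphism `φ : G_n → H` with `φ(f) ≠ 1`. -/
theorem stmt10 (n : ℕ) (hn : 2 ≤ n)
    (G : Subgroup ((Fin n → AddCircle (1 : ℝ)) ≃ₜ (Fin n → AddCircle (1 : ℝ))))
    (hG : (G : Set ((Fin n → AddCircle (1 : ℝ)) ≃ₜ (Fin n → AddCircle (1 : ℝ)))) =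
      piecewiseLinearHomeos n)
    (f : G) (hf : f ≠ 1) :
    ∃ (H : Type) (_ : Group H) (_ : Finite H) (φ : G →* H), φ f ≠ 1 := by
  classical
  -- a point where `f` moves something
  have hfx : ∃ x, (f : (Fin n → AddCircle (1 : ℝ)) ≃ₜ (Fin n → AddCircle (1 : ℝ))) x ≠ x := by
    by_contra h
    push_neg at h
    exact hf (Subtype.ext (Homeomorph.ext h))
  obtain ⟨x0, hx0⟩ := hfx
  -- the set where `f` moves points is open
  have hU : IsOpen {x : Fin n → AddCircle (1 : ℝ) |
      (f : (Fin n → AddCircle (1 : ℝ)) ≃ₜ (Fin n → AddCircle (1 : ℝ))) x ≠ x} :=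
    isOpen_ne_fun (f : (Fin n → AddCircle (1 : ℝ)) ≃ₜ (Fin n → AddCircle (1 : ℝ))).continuous continuous_id
  obtain ⟨I, u, hu, hsub⟩ := isOpen_pi_iff.1 hU x0 hx0
  -- pick a rational point in the open box
  have hq : ∀ i : Fin n, ∃ q : ℚ,
      i ∈ I → (((q:ℝ)) : AddCircle (1:ℝ)) ∈ u i := by
    intro i
    by_cases hi : i ∈ I
    · obtain ⟨q, hq⟩ := aux_exists_rat_mem (u i) (hu i hi).1 ⟨x0 i, (hu i hi).2⟩
      exact ⟨q, fun _ => hq⟩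
    · exact ⟨0, fun h => absurd h hi⟩
  choose q hq using hq
  set y : Fin n → AddCircle (1:ℝ) := fun i => (((q i : ℝ)) : AddCircle (1:ℝ)) with hy_def
  have hyU : (f : (Fin n → AddCircle (1 : ℝ)) ≃ₜ _) y ≠ y := by
    apply hsub
    intro i hi
    exact hq i hi
  -- the common torsion order
  set m : ℕ := ∏ i, (q i).den with hm_def
  have hm : 0 < m := Finset.prod_pos fun i _ => (q i).pos
  -- `y` is `m`-torsion
  have hyT : ∀ i, m • y i = 0 := by
    intro i
    have hden : (q i).den • y i = 0 := by
      have h := AddCircle.addOrderOf_coe_rat (p := (1:ℝ)) (q := q i)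
      rw [mul_one] at h
      rw [hy_def]
      simp only
      rw [← h]
      exact addOrderOf_nsmul_eq_zero _
    obtain ⟨c, hc⟩ := Finset.dvd_prod_of_mem (fun i => (q i).den) (Finset.mem_univ i)
    rw [hm_def, hc, mul_comm, ← smul_smul, hden, smul_zero]
  -- the finite invariant torsion set
  set T : Set (Fin n → AddCircle (1:ℝ)) := {x | ∀ i, m • x i = 0} with hT_def
  have hTfin : T.Finite := by
    have : T ⊆ Set.pi Set.univ (fun _ : Fin n => {u : AddCircle (1:ℝ) | m • u = 0}) := by
      intro x hx i _
      exact hx i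
    exact Set.Finite.subset (Set.Finite.pi fun _ => aux_torsion_finite m hm) this
  -- invariance of `T` under every element of `G`
  have hinv : ∀ g : G, ∀ x ∈ T,
      (g : (Fin n → AddCircle (1 : ℝ)) ≃ₜ _) x ∈ T := by
    intro g x hx
    have hg : (g : (Fin n → AddCircle (1 : ℝ)) ≃ₜ _) ∈ piecewiseLinearHomeos n := by
      rw [← hG]
      exact g.2
    obtain ⟨S, hS⟩ := hg
    obtain ⟨γ, _, hγ⟩ := hS x
    intro j
    rw [hγ]
    exact aux_torusAct_torsion m _ x hx j
  have hiff : ∀ g : G, ∀ x, x ∈ T ↔ (g : (Fin n → AddCircle (1 : ℝ)) ≃ₜ _) x ∈ T := by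
    intro g x
    refine ⟨hinv g x, fun h => ?_⟩
    have h2 := hinv g⁻¹ _ h
    have h3 : ((g⁻¹ : G) : (Fin n → AddCircle (1 : ℝ)) ≃ₜ _)
        (((g : G) : (Fin n → AddCircle (1 : ℝ)) ≃ₜ _) x) = x := by
      have h4 : ((g⁻¹ : G) : (Fin n → AddCircle (1 : ℝ)) ≃ₜ _)
          (((g : G) : (Fin n → AddCircle (1 : ℝ)) ≃ₜ _) x)
          = (((g⁻¹ * g : G) : (Fin n → AddCircle (1 : ℝ)) ≃ₜ (Fin n → AddCircle (1 : ℝ)))) x := rfl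
      rw [h4, inv_mul_cancel]
      rfl
    rwa [h3] at h2
  haveI : Finite ↥T := hTfin.to_subtype
  -- the restriction homomorphism
  refine ⟨Equiv.Perm ↥T, inferInstance, inferInstance,
    { toFun := fun g => Equiv.Perm.subtypePerm
        ((g : (Fin n → AddCircle (1 : ℝ)) ≃ₜ _).toEquiv) (fun x => (hiff g x).symm)
      map_one' := by
        apply Equiv.ext
        intro x
        apply Subtype.ext
        rfl
      map_mul' := by
        intro g h
        apply Equiv.ext
        intro x
        apply Subtype.ext
        rfl }, ?_⟩
  intro hcontra
  have h2 := Equiv.ext_iff.1 hcontra ⟨y, hyT⟩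
  have h3 : (f : (Fin n → AddCircle (1 : ℝ)) ≃ₜ _) y = y := by
    simpa [Equiv.Perm.subtypePerm, Subtype.ext_iff] using h2
  exact hyU h3
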